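/- The sequence N ↦ T_N^* of maxima of T_N over the admissible simplex is strictly increasing. -/

import Mathlib

open Real

/-- The finite-horizon throughput functional `T_N` (log base 2), evaluated at a
sequence indexed from 1 (only coordinates `1,…,N` matter). -/
noncomputable def TN (B γ p : ℝ) (w N : ℕ) (ξ : ℕ → ℝ) : ℝ :=
  (∑ k ∈ Finset.Icc 1 w, p ^ 2 * (1 - p) ^ (k - 1) * ((k : ℝ) / 2) *
      Real.logb 2 (1 + γ * B / k))
  + (∑ j ∈ Finset.Icc 1 N, p * (1 - p) ^ (j + w - 1) * (1 / 2) *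
      Real.logb 2 (1 + γ * ξ j))
  + (∑ k ∈ Finset.Icc 1 N, p ^ 2 * (1 - p) ^ (k + w - 1) * ((w : ℝ) / 2) *
      Real.logb 2 (1 + (γ / w) * (B - ∑ j ∈ Finset.Icc 1 k, ξ j)))
  + p * (1 - p) ^ (w + N) * ((w : ℝ) / 2) *
      Real.logb 2 (1 + (γ / w) * (B - ∑ j ∈ Finset.Icc 1 N, ξ j))

/-- The admissible simplex `{ξ : ξ_j ≥ 0, ∑_{j=1}^N ξ_j ≤ B}`, as sequences supported
on coordinates `1,…,N`. -/
def adm (B : ℝ) (N : ℕ) : Set (ℕ → ℝ) :=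
  {ξ | (∀ j, 1 ≤ j → j ≤ N → 0 ≤ ξ j) ∧ (∀ j, j = 0 ∨ N < j → ξ j = 0)
      ∧ ∑ j ∈ Finset.Icc 1 N, ξ j ≤ B}

private lemma core1 (A s : ℝ) (w : ℕ) (hw : 1 ≤ w) (hA : A = 1 + s) (hs : 0 < s) :
    A ^ w < (1 + s/2) * (A - s/(2*w)) ^ w := by
  have hw0 : (0:ℝ) < w := by exact_mod_cast hw
  have hw1 : (1:ℝ) ≤ w := by exact_mod_cast hw
  have hA1 : (1:ℝ) < A := by rw [hA]; linarith
  have hA0 : (0:ℝ) < A := by linarith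
  set t : ℝ := s/(2*w*A) with ht
  have ht0 : 0 < t := by positivity
  have ht1 : t < 1 := by
    rw [ht, div_lt_one (by positivity)]
    nlinarith
  have hber : 1 - (w:ℝ)*t ≤ (1 - t)^w := by
    have h := one_add_mul_le_pow (a := -t) (by linarith) w
    have e1 : (1:ℝ) + w*(-t) = 1 - w*t := by ring
    have e2 : (1:ℝ) + (-t) = 1 - t := by ring
    rwa [e1, e2] at h
  have key : A - s/(2*w) = (1-t)*A := by
    rw [ht]; field_simp
  have h1 : (w:ℝ)*t = s/(2*A) := by rw [ht]; field_simp
  rw [key, mul_pow]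
  have hAw : 0 < A^w := pow_pos hA0 w
  have h2 : (1:ℝ) < (1+s/2)*(1 - s/(2*A)) := by
    have e : (1+s/2)*(1 - s/(2*A)) - 1 = s^2/(4*A) := by field_simp; rw [hA]; ring
    nlinarith [div_pos (by positivity : (0:ℝ) < s^2) (by positivity : (0:ℝ) < 4*A)]
  calc A^w = 1 * A^w := (one_mul _).symm
    _ < ((1+s/2)*(1 - s/(2*A))) * A^w := mul_lt_mul_of_pos_right h2 hAw
    _ = (1+s/2)*((1 - s/(2*A)) * A^w) := by ring
    _ ≤ (1+s/2)*((1-t)^w * A^w) := by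
        apply mul_le_mul_of_nonneg_left _ (by linarith)
        apply mul_le_mul_of_nonneg_right _ (le_of_lt hAw)
        calc 1 - s/(2*A) = 1 - w*t := by rw [h1]
          _ ≤ (1-t)^w := hber

private lemma core2 (γ x : ℝ) (w : ℕ) (hγ : 0 < γ) (hx : 0 < x) (hw : 1 ≤ w) :
    1 + γ*x < (1 + γ*(x/2)) * (1 + (γ/w)*(x/2))^w := by
  have hw0 : (0:ℝ) < w := by exact_mod_cast hw
  have hber : 1 + (w:ℝ)*((γ/w)*(x/2)) ≤ (1 + (γ/w)*(x/2))^w :=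
    one_add_mul_le_pow (le_trans (by norm_num) (by positivity : (0:ℝ) ≤ γ/w*(x/2))) w
  have h1 : (w:ℝ)*((γ/w)*(x/2)) = γ*(x/2) := by field_simp
  rw [h1] at hber
  calc 1+γ*x < (1+γ*(x/2))*(1+γ*(x/2)) := by nlinarith [mul_pos (mul_pos hγ hx) (mul_pos hγ hx)]
    _ ≤ _ := mul_le_mul_of_nonneg_left hber (by positivity)

private lemma sum_update_g (s : Finset ℕ) (g : ℕ → ℝ → ℝ) (ξ : ℕ → ℝ) (m : ℕ) (v : ℝ)
    (hm : m ∈ s) :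
    ∑ j ∈ s, g j (Function.update ξ m v j)
      = (∑ j ∈ s, g j (ξ j)) - g m (ξ m) + g m v := by
  rw [← Finset.add_sum_erase _ (fun j => g j (Function.update ξ m v j)) hm,
      ← Finset.add_sum_erase _ (fun j => g j (ξ j)) hm]
  have h : ∑ j ∈ s.erase m, g j (Function.update ξ m v j)
      = ∑ j ∈ s.erase m, g j (ξ j) :=
    Finset.sum_congr rfl fun j hj => by
      rw [Function.update_of_ne (Finset.ne_of_mem_erase hj)]
  rw [h]
  simp [Function.update_self]
  ring

private lemma sum_update_mem (s : Finset ℕ) (ξ : ℕ → ℝ) (m : ℕ) (v : ℝ) (hm : m ∈ s) :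
    ∑ j ∈ s, Function.update ξ m v j = (∑ j ∈ s, ξ j) - ξ m + v :=
  sum_update_g s (fun _ x => x) ξ m v hm

private lemma sum_update_not_mem (s : Finset ℕ) (ξ : ℕ → ℝ) (m : ℕ) (v : ℝ) (hm : m ∉ s) :
    ∑ j ∈ s, Function.update ξ m v j = ∑ j ∈ s, ξ j :=
  Finset.sum_congr rfl fun j hj => Function.update_of_ne (by rintro rfl; exact hm hj) _ _

private lemma geom_aux (q : ℝ) (m : ℕ) : ∀ N, m ≤ N →
    (1 - q) * ∑ k ∈ Finset.Icc m N, q ^ k = q ^ m - q ^ (N + 1) := by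
  intro N
  induction N with
  | zero =>
    intro h
    interval_cases m
    simp
  | succ n ih =>
    intro h
    rcases Nat.lt_or_ge m (n+1) with h' | h'
    · rw [Finset.sum_Icc_succ_top (by omega : m ≤ n + 1)]
      have e := ih (by omega)
      linear_combination e
    · have : m = n + 1 := by omega
      subst this
      simp; ring

private lemma geom_shift (q : ℝ) (m N w : ℕ) (hm : m ≤ N) (hw : 1 ≤ w) :
    (1 - q) * ∑ k ∈ Finset.Icc m N, q ^ (k + w - 1)
      = q ^ (m + w - 1) - q ^ (N + w) := by
  have h1 : ∑ k ∈ Finset.Icc m N, q ^ (k + w - 1)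
      = q ^ (w - 1) * ∑ k ∈ Finset.Icc m N, q ^ k := by
    rw [Finset.mul_sum]
    refine Finset.sum_congr rfl fun k _ => ?_
    rw [show k + w - 1 = (w - 1) + k by omega, pow_add]
  rw [h1, show (1 - q) * (q ^ (w-1) * ∑ k ∈ Finset.Icc m N, q ^ k)
      = q ^ (w-1) * ((1 - q) * ∑ k ∈ Finset.Icc m N, q ^ k) by ring,
    geom_aux q m N hm, mul_sub, ← pow_add, ← pow_add,
    show w - 1 + m = m + w - 1 by omega, show w - 1 + (N + 1) = N + w by omega]
private lemma split_at (m N : ℕ) (f : ℕ → ℝ) (h1 : 1 ≤ m) (h2 : m ≤ N) :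
    ∑ k ∈ Finset.Icc 1 N, f k = (∑ k ∈ Finset.Icc 1 (m-1), f k) + ∑ k ∈ Finset.Icc m N, f k := by
  have e1 : Finset.Icc 1 (m-1) = Finset.Ioc 0 (m-1) := Finset.Icc_add_one_left_eq_Ioc 0 (m-1)
  have e2 : Finset.Icc m N = Finset.Ioc (m-1) N := by
    rw [show m = (m-1) + 1 by omega, Finset.Icc_add_one_left_eq_Ioc, Nat.add_sub_cancel]
  have e3 : Finset.Icc 1 N = Finset.Ioc 0 N := Finset.Icc_add_one_left_eq_Ioc 0 N
  rw [e1, e2, e3, Finset.sum_Ioc_consecutive f (by omega) (by omega)]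

private lemma case1_val (B γ p : ℝ) (w N : ℕ) (hw : 1 ≤ w) (hN : 1 ≤ N)
    (ξ : ℕ → ℝ) (hz : ξ (N+1) = 0) (ε : ℝ) :
    TN B γ p w (N+1) (Function.update ξ (N+1) ε)
      = TN B γ p w N ξ
        + p * (1-p)^(N+w) * (1/2) *
          (Real.logb 2 (1 + γ * ε)
            + w * Real.logb 2 (1 + (γ/w) * (B - ((∑ j ∈ Finset.Icc 1 N, ξ j) + ε)))
            - w * Real.logb 2 (1 + (γ/w) * (B - ∑ j ∈ Finset.Icc 1 N, ξ j))) := by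
  have h1N : (1:ℕ) ≤ N + 1 := by omega
  unfold TN
  rw [Finset.sum_Icc_succ_top h1N (fun j => p * (1 - p) ^ (j + w - 1) * (1 / 2) *
      Real.logb 2 (1 + γ * Function.update ξ (N+1) ε j)),
    Finset.sum_Icc_succ_top h1N (fun k => p ^ 2 * (1 - p) ^ (k + w - 1) * ((w : ℝ) / 2) *
      Real.logb 2 (1 + (γ / w) * (B - ∑ j ∈ Finset.Icc 1 k, Function.update ξ (N+1) ε j)))]
  have e2 : ∑ j ∈ Finset.Icc 1 N, p * (1 - p) ^ (j + w - 1) * (1 / 2) *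
      Real.logb 2 (1 + γ * Function.update ξ (N+1) ε j)
      = ∑ j ∈ Finset.Icc 1 N, p * (1 - p) ^ (j + w - 1) * (1 / 2) *
      Real.logb 2 (1 + γ * ξ j) := by
    refine Finset.sum_congr rfl fun j hj => ?_
    rw [Function.update_of_ne (by simp at hj; omega)]
  have e3 : ∑ k ∈ Finset.Icc 1 N, p ^ 2 * (1 - p) ^ (k + w - 1) * ((w : ℝ) / 2) *
      Real.logb 2 (1 + (γ / w) * (B - ∑ j ∈ Finset.Icc 1 k, Function.update ξ (N+1) ε j))
      = ∑ k ∈ Finset.Icc 1 N, p ^ 2 * (1 - p) ^ (k + w - 1) * ((w : ℝ) / 2) *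
      Real.logb 2 (1 + (γ / w) * (B - ∑ j ∈ Finset.Icc 1 k, ξ j)) := by
    refine Finset.sum_congr rfl fun k hk => ?_
    rw [sum_update_not_mem _ _ _ _ (by simp only [Finset.mem_Icc] at hk ⊢; omega)]
  have e4 : ∑ j ∈ Finset.Icc 1 (N+1), Function.update ξ (N+1) ε j
      = (∑ j ∈ Finset.Icc 1 N, ξ j) + ε := by
    rw [sum_update_mem _ _ _ _ (Finset.mem_Icc.mpr ⟨by omega, le_refl _⟩),
      Finset.sum_Icc_succ_top h1N, hz]
    ring
  rw [e2, e3, e4, Function.update_self,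
    show N + 1 + w - 1 = N + w by omega]
  ring

private lemma case2_val (B γ p : ℝ) (w N m : ℕ) (hw : 1 ≤ w) (hm1 : 1 ≤ m) (hmN : m ≤ N)
    (ξ : ℕ → ℝ)
    (hSk : ∀ k, m ≤ k → k ≤ N → ∑ j ∈ Finset.Icc 1 k, ξ j = B) :
    TN B γ p w N (Function.update ξ m (ξ m / 2))
      = TN B γ p w N ξ
        + (p/2) * (1-p)^(m+w-1) *
          (Real.logb 2 (1 + γ * (ξ m / 2)) - Real.logb 2 (1 + γ * ξ m)
            + w * Real.logb 2 (1 + (γ/w) * (B - (B - ξ m + ξ m / 2)))) := by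
  have hmIcc : m ∈ Finset.Icc 1 N := Finset.mem_Icc.mpr ⟨hm1, hmN⟩
  unfold TN
  -- second sum
  have e2 := sum_update_g (Finset.Icc 1 N)
    (fun j x => p * (1 - p) ^ (j + w - 1) * (1 / 2) * Real.logb 2 (1 + γ * x))
    ξ m (ξ m / 2) hmIcc
  rw [e2]
  -- third sums, split at m
  rw [split_at m N (fun k => p ^ 2 * (1 - p) ^ (k + w - 1) * ((w : ℝ) / 2) *
      Real.logb 2 (1 + (γ / w) * (B - ∑ j ∈ Finset.Icc 1 k, Function.update ξ m (ξ m / 2) j))) hm1 hmN,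
    split_at m N (fun k => p ^ 2 * (1 - p) ^ (k + w - 1) * ((w : ℝ) / 2) *
      Real.logb 2 (1 + (γ / w) * (B - ∑ j ∈ Finset.Icc 1 k, ξ j))) hm1 hmN]
  have e3a : ∑ k ∈ Finset.Icc 1 (m-1), p ^ 2 * (1 - p) ^ (k + w - 1) * ((w : ℝ) / 2) *
      Real.logb 2 (1 + (γ / w) * (B - ∑ j ∈ Finset.Icc 1 k, Function.update ξ m (ξ m / 2) j))
      = ∑ k ∈ Finset.Icc 1 (m-1), p ^ 2 * (1 - p) ^ (k + w - 1) * ((w : ℝ) / 2) *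
      Real.logb 2 (1 + (γ / w) * (B - ∑ j ∈ Finset.Icc 1 k, ξ j)) := by
    refine Finset.sum_congr rfl fun k hk => ?_
    rw [sum_update_not_mem _ _ _ _ (by simp only [Finset.mem_Icc] at hk ⊢; omega)]
  have e3b : ∑ k ∈ Finset.Icc m N, p ^ 2 * (1 - p) ^ (k + w - 1) * ((w : ℝ) / 2) *
      Real.logb 2 (1 + (γ / w) * (B - ∑ j ∈ Finset.Icc 1 k, Function.update ξ m (ξ m / 2) j))
      = (∑ k ∈ Finset.Icc m N, (1 - p) ^ (k + w - 1)) *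
        (p ^ 2 * ((w : ℝ) / 2) * Real.logb 2 (1 + (γ / w) * (B - (B - ξ m + ξ m / 2)))) := by
    rw [Finset.sum_mul]
    refine Finset.sum_congr rfl fun k hk => ?_
    simp only [Finset.mem_Icc] at hk
    rw [sum_update_mem _ _ _ _ (Finset.mem_Icc.mpr ⟨hm1, hk.1⟩), hSk k hk.1 hk.2]
    ring
  have e3c : ∑ k ∈ Finset.Icc m N, p ^ 2 * (1 - p) ^ (k + w - 1) * ((w : ℝ) / 2) *
      Real.logb 2 (1 + (γ / w) * (B - ∑ j ∈ Finset.Icc 1 k, ξ j)) = 0 := by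
    refine Finset.sum_eq_zero fun k hk => ?_
    simp only [Finset.mem_Icc] at hk
    rw [hSk k hk.1 hk.2, sub_self, mul_zero, add_zero, Real.logb_one, mul_zero]
  have e4a : ∑ j ∈ Finset.Icc 1 N, Function.update ξ m (ξ m / 2) j
      = B - ξ m + ξ m / 2 := by
    rw [sum_update_mem _ _ _ _ hmIcc, hSk N hmN le_rfl]
  have e4b : Real.logb 2 (1 + (γ/w) * (B - ∑ j ∈ Finset.Icc 1 N, ξ j)) = 0 := by
    rw [hSk N hmN le_rfl, sub_self, mul_zero, add_zero, Real.logb_one]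
  rw [e3a, e3b, e3c, e4a, e4b]
  have hgeom := geom_shift (1-p) m N w hmN hw
  linear_combination (p * ((w:ℝ)/2) * Real.logb 2 (1 + (γ/w) * (B - (B - ξ m + ξ m / 2)))) * hgeom

private lemma adm_isCompact (B : ℝ) (hB : 0 ≤ B) (N : ℕ) : IsCompact (adm B N) := by
  have hsub : adm B N ⊆ Set.pi Set.univ
      (fun j => if 1 ≤ j ∧ j ≤ N then Set.Icc (0:ℝ) B else {(0:ℝ)}) := by
    intro ξ hξ j _
    obtain ⟨h1, h2, h3⟩ := hξ
    by_cases h : 1 ≤ j ∧ j ≤ N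
    · simp only [h, if_true, Set.mem_Icc]
      refine ⟨h1 j h.1 h.2, ?_⟩
      calc ξ j ≤ ∑ i ∈ Finset.Icc 1 N, ξ i :=
            Finset.single_le_sum (fun i hi => h1 i (Finset.mem_Icc.mp hi).1
              (Finset.mem_Icc.mp hi).2) (Finset.mem_Icc.mpr ⟨h.1, h.2⟩)
        _ ≤ B := h3
    · simp only [h, if_false, Set.mem_singleton_iff]
      exact h2 j (by omega)
  have hclosed : IsClosed (adm B N) := by
    have e : adm B N = (⋂ j, {ξ : ℕ → ℝ | 1 ≤ j → j ≤ N → 0 ≤ ξ j})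
        ∩ ((⋂ j, {ξ : ℕ → ℝ | j = 0 ∨ N < j → ξ j = 0})
        ∩ {ξ : ℕ → ℝ | ∑ j ∈ Finset.Icc 1 N, ξ j ≤ B}) := by
      ext ξ
      simp only [adm, Set.mem_setOf_eq, Set.mem_inter_iff, Set.mem_iInter]
    rw [e]
    refine IsClosed.inter (isClosed_iInter fun j => ?_)
      (IsClosed.inter (isClosed_iInter fun j => ?_) ?_)
    · by_cases h : 1 ≤ j ∧ j ≤ N
      · have : {ξ : ℕ → ℝ | 1 ≤ j → j ≤ N → 0 ≤ ξ j} = {ξ : ℕ → ℝ | 0 ≤ ξ j} := by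
          ext ξ; simp [h.1, h.2]
        rw [this]
        exact isClosed_le continuous_const (continuous_apply j)
      · have : {ξ : ℕ → ℝ | 1 ≤ j → j ≤ N → 0 ≤ ξ j} = Set.univ := by
          ext ξ; simp only [Set.mem_setOf_eq, Set.mem_univ, iff_true]
          intro h1 h2; exact absurd ⟨h1, h2⟩ h
        rw [this]; exact isClosed_univ
    · by_cases h : j = 0 ∨ N < j
      · have : {ξ : ℕ → ℝ | j = 0 ∨ N < j → ξ j = 0} = {ξ : ℕ → ℝ | ξ j = 0} := by
          ext ξ; simp [h]
        rw [this]
        exact isClosed_eq (continuous_apply j) continuous_const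
      · have : {ξ : ℕ → ℝ | j = 0 ∨ N < j → ξ j = 0} = Set.univ := by
          ext ξ; simp only [Set.mem_setOf_eq, Set.mem_univ, iff_true]
          intro h1; exact absurd h1 h
        rw [this]; exact isClosed_univ
    · exact isClosed_le (continuous_finset_sum _ fun j _ => continuous_apply j)
        continuous_const
  exact IsCompact.of_isClosed_subset
    (isCompact_univ_pi fun j => by
      by_cases h : 1 ≤ j ∧ j ≤ N
      · simp only [h, if_true]; exact isCompact_Icc
      · simp only [h, if_false]; exact isCompact_singleton)
    hclosed hsub

private lemma adm_zero_mem (B : ℝ) (hB : 0 ≤ B) (N : ℕ) : (fun _ => (0:ℝ)) ∈ adm B N := by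
  refine ⟨fun _ _ _ => le_refl 0, fun _ _ => rfl, ?_⟩
  simpa using hB

private lemma sum_partial_le (B : ℝ) (N : ℕ) (ξ : ℕ → ℝ) (hξ : ξ ∈ adm B N)
    (k : ℕ) (hk : k ≤ N) : ∑ j ∈ Finset.Icc 1 k, ξ j ≤ B := by
  obtain ⟨h1, h2, h3⟩ := hξ
  calc ∑ j ∈ Finset.Icc 1 k, ξ j ≤ ∑ j ∈ Finset.Icc 1 N, ξ j := by
        apply Finset.sum_le_sum_of_subset_of_nonneg
        · exact Finset.Icc_subset_Icc_right hk
        · intro i hi _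
          exact h1 i (Finset.mem_Icc.mp hi).1 (Finset.mem_Icc.mp hi).2
    _ ≤ B := h3

private lemma TN_continuousOn (B γ p : ℝ) (w N : ℕ) (hγ : 0 < γ) :
    ContinuousOn (TN B γ p w N) (adm B N) := by
  intro ξ hξ
  apply ContinuousAt.continuousWithinAt
  have hgw : (0:ℝ) ≤ γ / (w:ℝ) := div_nonneg hγ.le (Nat.cast_nonneg w)
  unfold TN
  refine ContinuousAt.add (ContinuousAt.add (ContinuousAt.add continuousAt_const ?_) ?_) ?_
  · refine tendsto_finset_sum _ fun j hj => ?_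
    refine ContinuousAt.mul continuousAt_const ?_
    have harg : (1:ℝ) + γ * ξ j ≠ 0 := by
      have := hξ.1 j (Finset.mem_Icc.mp hj).1 (Finset.mem_Icc.mp hj).2
      nlinarith
    have hinner : ContinuousAt (fun ξ' : ℕ → ℝ => 1 + γ * ξ' j) ξ :=
      (continuous_const.add (continuous_const.mul (continuous_apply j))).continuousAt
    have hcomp : ContinuousAt (Real.logb 2 ∘ (fun ξ' : ℕ → ℝ => 1 + γ * ξ' j)) ξ :=
      ContinuousAt.comp (Real.continuousAt_logb harg) hinner
    exact hcomp
  · refine tendsto_finset_sum _ fun k hk => ?_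
    refine ContinuousAt.mul continuousAt_const ?_
    have hS := sum_partial_le B N ξ hξ k (Finset.mem_Icc.mp hk).2
    have harg : (1:ℝ) + (γ/w) * (B - ∑ j ∈ Finset.Icc 1 k, ξ j) ≠ 0 := by
      nlinarith [mul_nonneg hgw (by linarith : (0:ℝ) ≤ B - ∑ j ∈ Finset.Icc 1 k, ξ j)]
    have hinner : ContinuousAt
        (fun ξ' : ℕ → ℝ => 1 + (γ/w) * (B - ∑ j ∈ Finset.Icc 1 k, ξ' j)) ξ :=
      (continuous_const.add (continuous_const.mul (continuous_const.sub
        (continuous_finset_sum _ fun j _ => continuous_apply j)))).continuousAt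
    have hcomp : ContinuousAt (Real.logb 2 ∘
        (fun ξ' : ℕ → ℝ => 1 + (γ/w) * (B - ∑ j ∈ Finset.Icc 1 k, ξ' j))) ξ :=
      ContinuousAt.comp (Real.continuousAt_logb harg) hinner
    exact hcomp
  · refine ContinuousAt.mul continuousAt_const ?_
    have hS := sum_partial_le B N ξ hξ N le_rfl
    have harg : (1:ℝ) + (γ/w) * (B - ∑ j ∈ Finset.Icc 1 N, ξ j) ≠ 0 := by
      nlinarith [mul_nonneg hgw (by linarith : (0:ℝ) ≤ B - ∑ j ∈ Finset.Icc 1 N, ξ j)]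
    have hinner : ContinuousAt
        (fun ξ' : ℕ → ℝ => 1 + (γ/w) * (B - ∑ j ∈ Finset.Icc 1 N, ξ' j)) ξ :=
      (continuous_const.add (continuous_const.mul (continuous_const.sub
        (continuous_finset_sum _ fun j _ => continuous_apply j)))).continuousAt
    have hcomp : ContinuousAt (Real.logb 2 ∘
        (fun ξ' : ℕ → ℝ => 1 + (γ/w) * (B - ∑ j ∈ Finset.Icc 1 N, ξ' j))) ξ :=
      ContinuousAt.comp (Real.continuousAt_logb harg) hinner
    exact hcomp

/-- The sequence `N ↦ T_N^*` of maxima of `T_N` over the admissible simplex is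
strictly increasing. -/
theorem TNstar_strictMono (B γ p : ℝ) (w : ℕ) (hB : 0 < B) (hγ : 0 < γ)
    (hw : 1 ≤ w) (hp : 0 < p) (hp1 : p < 1) (N : ℕ) (hN : 1 ≤ N) :
    sSup (TN B γ p w N '' adm B N) < sSup (TN B γ p w (N + 1) '' adm B (N + 1)) := by
  have hw0 : (0:ℝ) < w := by exact_mod_cast hw
  have hq : (0:ℝ) < 1 - p := by linarith
  have hgw : (0:ℝ) < γ / w := div_pos hγ hw0
  obtain ⟨ξ, hξ, hmax⟩ := (adm_isCompact B hB.le N).exists_isMaxOn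
    ⟨_, adm_zero_mem B hB.le N⟩ (TN_continuousOn B γ p w N hγ)
  have hsup : sSup (TN B γ p w N '' adm B N) = TN B γ p w N ξ :=
    IsGreatest.csSup_eq ⟨Set.mem_image_of_mem _ hξ, by
      rintro _ ⟨y, hy, rfl⟩; exact hmax hy⟩
  have hbdd : BddAbove (TN B γ p w (N+1) '' adm B (N+1)) :=
    ((adm_isCompact B hB.le (N+1)).image_of_continuousOn
      (TN_continuousOn B γ p w (N+1) hγ)).bddAbove
  have hS0 : 0 ≤ ∑ j ∈ Finset.Icc 1 N, ξ j :=
    Finset.sum_nonneg fun j hj =>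
      hξ.1 j (Finset.mem_Icc.mp hj).1 (Finset.mem_Icc.mp hj).2
  rcases lt_or_eq_of_le hξ.2.2 with hSB | hSB
  · -- slack budget: put some power on coordinate N+1
    set ε : ℝ := (B - ∑ j ∈ Finset.Icc 1 N, ξ j) / (2*w) with hε
    have hR : 0 < B - ∑ j ∈ Finset.Icc 1 N, ξ j := by linarith
    have hε0 : 0 < ε := by positivity
    have hz : ξ (N+1) = 0 := hξ.2.1 (N+1) (Or.inr (by omega))
    have hεle : ε ≤ B - ∑ j ∈ Finset.Icc 1 N, ξ j := by
      rw [hε]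
      apply div_le_self hR.le
      have hw1 : (1:ℝ) ≤ (w:ℝ) := by exact_mod_cast hw
      linarith
    have hηmem : Function.update ξ (N+1) ε ∈ adm B (N+1) := by
      refine ⟨?_, ?_, ?_⟩
      · intro j hj1 hj2
        by_cases hj : j = N+1
        · subst hj; rw [Function.update_self]; exact hε0.le
        · rw [Function.update_of_ne hj]; exact hξ.1 j hj1 (by omega)
      · intro j hj
        rw [Function.update_of_ne (by omega)]
        exact hξ.2.1 j (by omega)
      · rw [sum_update_mem _ _ _ _ (Finset.mem_Icc.mpr ⟨by omega, le_refl _⟩),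
          Finset.sum_Icc_succ_top (by omega : (1:ℕ) ≤ N+1), hz]
        linarith
    have hval := case1_val B γ p w N hw hN ξ hz ε
    have harg1 : 0 < 1 + γ * ε := by
      have := mul_pos hγ hε0; linarith
    have hRε : 0 ≤ B - ((∑ j ∈ Finset.Icc 1 N, ξ j) + ε) := by
      linarith
    have harg2 : 0 < 1 + (γ/w) * (B - ((∑ j ∈ Finset.Icc 1 N, ξ j) + ε)) := by
      have := mul_nonneg hgw.le hRε; linarith
    have harg3 : 0 < 1 + (γ/w) * (B - ∑ j ∈ Finset.Icc 1 N, ξ j) := by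
      have := mul_pos hgw hR; linarith
    have hkey : (1 + (γ/w) * (B - ∑ j ∈ Finset.Icc 1 N, ξ j))^w
        < (1 + γ * ε) * (1 + (γ/w) * (B - ((∑ j ∈ Finset.Icc 1 N, ξ j) + ε)))^w := by
      have hc := core1 (1 + (γ/w) * (B - ∑ j ∈ Finset.Icc 1 N, ξ j))
        ((γ/w) * (B - ∑ j ∈ Finset.Icc 1 N, ξ j)) w hw rfl (mul_pos hgw hR)
      have e1 : 1 + γ * ε = 1 + ((γ/w) * (B - ∑ j ∈ Finset.Icc 1 N, ξ j))/2 := by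
        rw [hε]; field_simp
      have e2 : 1 + (γ/w) * (B - ((∑ j ∈ Finset.Icc 1 N, ξ j) + ε))
          = (1 + (γ/w) * (B - ∑ j ∈ Finset.Icc 1 N, ξ j))
            - ((γ/w) * (B - ∑ j ∈ Finset.Icc 1 N, ξ j))/(2*w) := by
        rw [hε]; field_simp; ring
      rw [e1, e2]; exact hc
    have hbr : 0 < Real.logb 2 (1 + γ * ε)
        + w * Real.logb 2 (1 + (γ/w) * (B - ((∑ j ∈ Finset.Icc 1 N, ξ j) + ε)))
        - w * Real.logb 2 (1 + (γ/w) * (B - ∑ j ∈ Finset.Icc 1 N, ξ j)) := by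
      have l1 : (w:ℝ) * Real.logb 2 (1 + (γ/w) * (B - ((∑ j ∈ Finset.Icc 1 N, ξ j) + ε)))
          = Real.logb 2 ((1 + (γ/w) * (B - ((∑ j ∈ Finset.Icc 1 N, ξ j) + ε)))^w) :=
        (Real.logb_pow _ _ _).symm
      have l2 : (w:ℝ) * Real.logb 2 (1 + (γ/w) * (B - ∑ j ∈ Finset.Icc 1 N, ξ j))
          = Real.logb 2 ((1 + (γ/w) * (B - ∑ j ∈ Finset.Icc 1 N, ξ j))^w) :=
        (Real.logb_pow _ _ _).symm
      rw [l1, l2, ← Real.logb_mul (ne_of_gt harg1) (ne_of_gt (pow_pos harg2 w))]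
      have := Real.logb_lt_logb (b := 2) one_lt_two (pow_pos harg3 w) hkey
      linarith
    have hppos : 0 < p * (1-p)^(N+w) * (1/2) := by positivity
    have hlt : TN B γ p w N ξ < TN B γ p w (N+1) (Function.update ξ (N+1) ε) := by
      rw [hval]
      have := mul_pos hppos hbr; linarith
    rw [hsup]
    exact lt_of_lt_of_le hlt (le_csSup hbdd (Set.mem_image_of_mem _ hηmem))
  · -- budget exhausted: maximizer contradiction
    exfalso
    have hFne : ((Finset.Icc 1 N).filter (fun j => ξ j ≠ 0)).Nonempty := by
      by_contra hcon
      rw [Finset.not_nonempty_iff_eq_empty, Finset.filter_eq_empty_iff] at hcon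
      have hz : ∑ j ∈ Finset.Icc 1 N, ξ j = 0 :=
        Finset.sum_eq_zero fun j hj => not_not.mp (hcon hj)
      rw [hz] at hSB
      linarith
    obtain ⟨m, hmmem, hmmax⟩ : ∃ m ∈ (Finset.Icc 1 N).filter (fun j => ξ j ≠ 0),
        ∀ j ∈ (Finset.Icc 1 N).filter (fun j => ξ j ≠ 0), j ≤ m :=
      ⟨_, Finset.max'_mem _ hFne, fun j hj => Finset.le_max' _ j hj⟩
    rw [Finset.mem_filter, Finset.mem_Icc] at hmmem
    obtain ⟨⟨hm1, hmN⟩, hmne⟩ := hmmem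
    have hmpos : 0 < ξ m := lt_of_le_of_ne (hξ.1 m hm1 hmN) (Ne.symm hmne)
    have hhigh : ∀ j, m < j → j ≤ N → ξ j = 0 := by
      intro j hj1 hj2
      by_contra hne
      have hjF : j ∈ (Finset.Icc 1 N).filter (fun j => ξ j ≠ 0) :=
        Finset.mem_filter.mpr ⟨Finset.mem_Icc.mpr ⟨by omega, hj2⟩, hne⟩
      have := hmmax j hjF
      omega
    have hSk : ∀ k, m ≤ k → k ≤ N → ∑ j ∈ Finset.Icc 1 k, ξ j = B := by
      intro k hk1 hk2
      have e1 : Finset.Icc 1 k = Finset.Ioc 0 k := Finset.Icc_add_one_left_eq_Ioc 0 k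
      have e2 : Finset.Icc 1 N = Finset.Ioc 0 N := Finset.Icc_add_one_left_eq_Ioc 0 N
      have hzero : ∑ j ∈ Finset.Ioc k N, ξ j = 0 :=
        Finset.sum_eq_zero fun j hj => by
          simp only [Finset.mem_Ioc] at hj
          exact hhigh j (by omega) hj.2
      have hcons := Finset.sum_Ioc_consecutive ξ (Nat.zero_le k) hk2
      rw [e2] at hSB
      rw [e1]
      linarith [hcons, hzero]
    have hmIcc : m ∈ Finset.Icc 1 N := Finset.mem_Icc.mpr ⟨hm1, hmN⟩
    have hηmem : Function.update ξ m (ξ m / 2) ∈ adm B N := by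
      refine ⟨?_, ?_, ?_⟩
      · intro j hj1 hj2
        by_cases hj : j = m
        · subst hj; rw [Function.update_self]; linarith
        · rw [Function.update_of_ne hj]; exact hξ.1 j hj1 hj2
      · intro j hj
        rw [Function.update_of_ne (by omega)]
        exact hξ.2.1 j hj
      · rw [sum_update_mem _ _ _ _ hmIcc]
        linarith
    have hval := case2_val B γ p w N m hw hm1 hmN ξ hSk
    rw [show B - (B - ξ m + ξ m / 2) = ξ m / 2 by ring] at hval
    have harg0 : 0 < 1 + γ * ξ m := by
      have := mul_pos hγ hmpos; linarith
    have harg1 : 0 < 1 + γ * (ξ m / 2) := by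
      have := mul_pos hγ (half_pos hmpos); linarith
    have harg2 : 0 < 1 + (γ/w) * (ξ m / 2) := by
      have := mul_pos hgw (half_pos hmpos); linarith
    have hkey := core2 γ (ξ m) w hγ hmpos hw
    have hbr : 0 < Real.logb 2 (1 + γ * (ξ m / 2)) - Real.logb 2 (1 + γ * ξ m)
        + w * Real.logb 2 (1 + (γ/w) * (ξ m / 2)) := by
      have l1 : (w:ℝ) * Real.logb 2 (1 + (γ/w) * (ξ m / 2))
          = Real.logb 2 ((1 + (γ/w) * (ξ m / 2))^w) := (Real.logb_pow _ _ _).symm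
      have hsum : Real.logb 2 (1 + γ * (ξ m / 2)) + Real.logb 2 ((1 + (γ/w) * (ξ m / 2))^w)
          = Real.logb 2 ((1 + γ * (ξ m / 2)) * (1 + (γ/w) * (ξ m / 2))^w) :=
        (Real.logb_mul (ne_of_gt harg1) (ne_of_gt (pow_pos harg2 w))).symm
      have hmono := Real.logb_lt_logb (b := 2) one_lt_two harg0 hkey
      linarith [l1, hsum, hmono]
    have hppos : 0 < (p/2) * (1-p)^(m+w-1) := by positivity
    have hlt2 : TN B γ p w N ξ < TN B γ p w N (Function.update ξ m (ξ m / 2)) := by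
      rw [hval]
      have := mul_pos hppos hbr; linarith
    exact absurd (hmax hηmem) (not_le.mpr hlt2)
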